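/- Let X be a nonempty set and let 𝒟 be a vector lattice of bounded real-valued functions on X (a vector space under pointwise operations, closed under pointwise maximum and minimum) that has the Stone property. Then the linear span 𝒟₀ of 𝒟₀⁺ is uniformly dense in 𝒟: for every f ∈ 𝒟 and every ε > 0 there exists g ∈ 𝒟₀ with ‖f − g‖_sup ≤ ε. -/
import Mathlib


open Filter Topology

/-- The supremum norm of a (bounded) real-valued function. -/
noncomputable def supNorm {X : Type*} (f : X → ℝ) : ℝ := ⨆ x, |f x|

/-- For a nonnegative `f`, the set `E_f` of functions `φ ∈ 𝒟` with `0 ≤ φ ≤ 1` and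
`φ = 1` on `{f > 0}`. -/
def Efam {X : Type*} (𝒟 : Set (X → ℝ)) (f : X → ℝ) : Set (X → ℝ) :=
  {φ | φ ∈ 𝒟 ∧ (∀ x, 0 ≤ φ x ∧ φ x ≤ 1) ∧ (∀ x, 0 < f x → φ x = 1)}

/-- The cone `𝒟₀⁺` of nonnegative `f ∈ 𝒟` with `E_f ≠ ∅`. -/
def D0plus {X : Type*} (𝒟 : Set (X → ℝ)) : Set (X → ℝ) :=
  {f | f ∈ 𝒟 ∧ (∀ x, 0 ≤ f x) ∧ (Efam 𝒟 f).Nonempty}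

/-- Theorem: if `𝒟` is a vector lattice of bounded functions with the Stone property,
then `𝒟₀ = span(𝒟₀⁺)` is uniformly dense in `𝒟`. -/
theorem statement_4 {X : Type*} [Nonempty X] (𝒟 : Set (X → ℝ))
    (hbdd : ∀ f ∈ 𝒟, ∃ C : ℝ, ∀ x, |f x| ≤ C)
    (hadd : ∀ f ∈ 𝒟, ∀ g ∈ 𝒟, f + g ∈ 𝒟)
    (hsmul : ∀ c : ℝ, ∀ f ∈ 𝒟, c • f ∈ 𝒟)
    (hmax : ∀ f ∈ 𝒟, ∀ g ∈ 𝒟, (fun x => max (f x) (g x)) ∈ 𝒟)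
    (hmin : ∀ f ∈ 𝒟, ∀ g ∈ 𝒟, (fun x => min (f x) (g x)) ∈ 𝒟)
    (hstone : ∀ f ∈ 𝒟, (fun x => min (f x) 1) ∈ 𝒟) :
    ∀ f ∈ 𝒟, ∀ ε : ℝ, 0 < ε →
      ∃ g ∈ Submodule.span ℝ (D0plus 𝒟), supNorm (f - g) ≤ ε := by
  -- Key lemma: approximate a nonnegative element of 𝒟 by an element of D0plus.
  have key : ∀ h ∈ 𝒟, (∀ x, 0 ≤ h x) → ∀ δ : ℝ, 0 < δ →
      ∃ g ∈ D0plus 𝒟, ∀ x, 0 ≤ h x - g x ∧ h x - g x ≤ δ := by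
    intro h hh hpos δ hδ
    set φ : X → ℝ := fun x => min (δ⁻¹ * h x) 1 with hφdef
    have hφD : φ ∈ 𝒟 := by
      have := hstone (δ⁻¹ • h) (hsmul δ⁻¹ h hh)
      simpa [hφdef, smul_eq_mul] using this
    set g : X → ℝ := fun x => h x - min (h x) δ with hgdef
    have hgD : g ∈ 𝒟 := by
      have hm : (fun x => min (h x) δ) ∈ 𝒟 := by
        have h1 := hsmul δ φ hφD
        have : (δ • φ) = fun x => min (h x) δ := by
          funext x
          simp only [hφdef, Pi.smul_apply, smul_eq_mul]
          rw [mul_min_of_nonneg _ _ hδ.le, mul_one, mul_inv_cancel_left₀ hδ.ne']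
        rwa [this] at h1
      have h2 := hadd h hh _ (hsmul (-1) _ hm)
      have : (h + (-1 : ℝ) • fun x => min (h x) δ) = g := by
        funext x; simp [hgdef]; ring
      rwa [this] at h2
    have hgpos : ∀ x, 0 ≤ g x := fun x => sub_nonneg.2 (min_le_left _ _)
    refine ⟨g, ⟨hgD, hgpos, φ, hφD, ?_, ?_⟩, ?_⟩
    · intro x
      exact ⟨le_min (mul_nonneg (inv_nonneg.2 hδ.le) (hpos x)) one_pos.le,
        min_le_right _ _⟩
    · intro x hx
      have hlt : δ < h x := by
        by_contra hle
        push_neg at hle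
        simp only [hgdef, min_eq_left hle, sub_self] at hx
        exact lt_irrefl 0 hx
      have : (1 : ℝ) ≤ δ⁻¹ * h x := by
        rw [le_inv_mul_iff₀ hδ, mul_one]; exact hlt.le
      simp [hφdef, min_eq_right this]
    · intro x
      constructor
      · have : g x ≤ h x := sub_le_self _ (le_min (hpos x) hδ.le)
        linarith
      · have : h x - g x = min (h x) δ := by simp [hgdef]
        rw [this]; exact min_le_right _ _
  intro f hf ε hε
  have hzero : (0 : X → ℝ) ∈ 𝒟 := by
    have := hsmul 0 f hf
    simpa using this
  have hfp : (fun x => max (f x) 0) ∈ 𝒟 := by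
    have := hmax f hf 0 hzero
    simpa using this
  have hfn : (fun x => max (-f x) 0) ∈ 𝒟 := by
    have hneg : (-1 : ℝ) • f ∈ 𝒟 := hsmul (-1) f hf
    have := hmax _ hneg 0 hzero
    simpa using this
  obtain ⟨g₁, hg₁, hb₁⟩ := key _ hfp (fun x => le_max_right _ _) (ε/2) (by linarith)
  obtain ⟨g₂, hg₂, hb₂⟩ := key _ hfn (fun x => le_max_right _ _) (ε/2) (by linarith)
  refine ⟨g₁ - g₂, ?_, ?_⟩
  · exact sub_mem (Submodule.subset_span hg₁) (Submodule.subset_span hg₂)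
  · apply ciSup_le
    intro x
    have hdec : f x = max (f x) 0 - max (-f x) 0 := (max_zero_sub_max_neg_zero_eq_self (f x)).symm
    have h1 := hb₁ x
    have h2 := hb₂ x
    rw [Pi.sub_apply, Pi.sub_apply, abs_le]
    constructor <;> linarith [h1.1, h1.2, h2.1, h2.2]
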